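/- Let S = k[x₁,…,xₙ] over a perfect field k of characteristic p, q = p^e, and let φ ∈ Hom_{S^q}(S, S^q) be the S^q-linear map sending the basis monomial (x₁⋯xₙ)^{q−1} to 1 and all other basis monomials x₁^{i₁}⋯xₙ^{iₙ} (0 ≤ i_j ≤ q−1) to 0. Then φ generates Hom_{S^q}(S, S^q) as an S-module. -/

import Mathlib

open MvPolynomial

set_option maxHeartbeats 1000000 in
set_option synthInstance.maxHeartbeats 200000 in
/-- Let `S = k[x₁,…,xₙ]` over a perfect field `k` of characteristic `p`,
`q = p^e`, and let `φ ∈ Hom_{S^q}(S, S^q)` be the `S^q`-linear map sending the basis monomial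
`(x₁⋯xₙ)^{q−1}` to `1` and all other basis monomials `x₁^{i₁}⋯xₙ^{iₙ}` (`0 ≤ i_j ≤ q−1`) to
`0`.  Then `φ` generates `Hom_{S^q}(S, S^q)` as an `S`-module, where the `S`-module structure
is `(s·ψ)(t) = ψ(s·t)`: every `ψ` is of the form `ψ = s·φ` for some `s ∈ S`. -/
theorem stmt3 {k : Type*} [Field k] [PerfectField k] {p : ℕ} [Fact p.Prime] [CharP k p]
    (n e : ℕ)
    (b : Module.Basis {v : Fin n → ℕ // ∀ j, v j < p ^ e}
      (RingHom.range (iterateFrobenius (MvPolynomial (Fin n) k) p e))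
      (MvPolynomial (Fin n) k))
    (hb : ∀ v : {v : Fin n → ℕ // ∀ j, v j < p ^ e},
      b v = ∏ j : Fin n, (X j : MvPolynomial (Fin n) k) ^ (v.1 j))
    (φ : MvPolynomial (Fin n) k →ₗ[RingHom.range (iterateFrobenius (MvPolynomial (Fin n) k) p e)]
      RingHom.range (iterateFrobenius (MvPolynomial (Fin n) k) p e))
    (hφ : ∀ v : {v : Fin n → ℕ // ∀ j, v j < p ^ e},
      φ (b v) = if ∀ j, v.1 j = p ^ e - 1 then 1 else 0) :
    ∀ ψ : MvPolynomial (Fin n) k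
        →ₗ[RingHom.range (iterateFrobenius (MvPolynomial (Fin n) k) p e)]
        RingHom.range (iterateFrobenius (MvPolynomial (Fin n) k) p e),
      ∃ s : MvPolynomial (Fin n) k, ∀ t : MvPolynomial (Fin n) k, ψ t = φ (s * t) := by
  classical
  have hq : 0 < p ^ e := pow_pos (Fact.out : p.Prime).pos e
  haveI : Fintype {v : Fin n → ℕ // ∀ j, v j < p ^ e} :=
    Fintype.ofEquiv (Fin n → Fin (p ^ e))
      { toFun := fun g => ⟨fun j => g j, fun j => (g j).2⟩
        invFun := fun v j => ⟨v.1 j, v.2 j⟩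
        left_inv := fun _ => rfl
        right_inv := fun _ => rfl }
  -- smul fact
  have hsmul : ∀ (r : RingHom.range (iterateFrobenius (MvPolynomial (Fin n) k) p e)) (x : MvPolynomial (Fin n) k), (↑r : MvPolynomial (Fin n) k) * x = r • x := fun _ _ => rfl
  -- φ on small monomials
  have hφmon : ∀ (u : Fin n → ℕ) (hu : ∀ j, u j < p ^ e),
      φ (∏ j, (X j : MvPolynomial (Fin n) k) ^ u j) = if ∀ j, u j = p ^ e - 1 then 1 else 0 := by
    intro u hu
    rw [← hb ⟨u, hu⟩]
    exact hφ ⟨u, hu⟩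
  -- φ on arbitrary monomials
  have hmon : ∀ u : Fin n → ℕ,
      φ (∏ j, (X j : MvPolynomial (Fin n) k) ^ u j) =
        (⟨(∏ j, (X j : MvPolynomial (Fin n) k) ^ (u j / p ^ e)) ^ p ^ e,
            ⟨∏ j, (X j : MvPolynomial (Fin n) k) ^ (u j / p ^ e), by rw [iterateFrobenius_def]⟩⟩ : RingHom.range (iterateFrobenius (MvPolynomial (Fin n) k) p e)) *
          (if ∀ j, u j % p ^ e = p ^ e - 1 then 1 else 0) := by
    intro u
    have h1 : (∏ j, (X j : MvPolynomial (Fin n) k) ^ u j) =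
        (∏ j, (X j : MvPolynomial (Fin n) k) ^ (u j / p ^ e)) ^ p ^ e * ∏ j, (X j : MvPolynomial (Fin n) k) ^ (u j % p ^ e) := by
      rw [← Finset.prod_pow, ← Finset.prod_mul_distrib]
      refine Finset.prod_congr rfl fun j _ => ?_
      rw [← pow_mul, ← pow_add, Nat.div_add_mod']
    rw [h1,
      hsmul ⟨(∏ j, (X j : MvPolynomial (Fin n) k) ^ (u j / p ^ e)) ^ p ^ e,
        ⟨∏ j, (X j : MvPolynomial (Fin n) k) ^ (u j / p ^ e), by rw [iterateFrobenius_def]⟩⟩,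
      map_smul, ← hφmon (fun j => u j % p ^ e) (fun j => Nat.mod_lt _ hq), smul_eq_mul]
  -- the key mod computation
  have key : ∀ a c : ℕ, a < p ^ e → c < p ^ e →
      ((p ^ e - 1 - a + c) % p ^ e = p ^ e - 1 ↔ a = c) := by
    intro a c ha hc
    rcases le_or_gt c a with h | h
    · rw [Nat.mod_eq_of_lt (by omega)]
      omega
    · have h2 : p ^ e - 1 - a + c = p ^ e + (c - a - 1) := by omega
      rw [h2, Nat.add_mod_left, Nat.mod_eq_of_lt (by omega)]
      omega
  intro ψ
  refine ⟨∑ v' : {v : Fin n → ℕ // ∀ j, v j < p ^ e},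
      (↑(ψ (b v')) : MvPolynomial (Fin n) k) * ∏ j, (X j : MvPolynomial (Fin n) k) ^ (p ^ e - 1 - v'.1 j), fun t => ?_⟩
  set s : MvPolynomial (Fin n) k := ∑ v' : {v : Fin n → ℕ // ∀ j, v j < p ^ e},
      (↑(ψ (b v')) : MvPolynomial (Fin n) k) * ∏ j, (X j : MvPolynomial (Fin n) k) ^ (p ^ e - 1 - v'.1 j) with hs
  have main : ψ = φ.comp (LinearMap.mulLeft (RingHom.range (iterateFrobenius (MvPolynomial (Fin n) k) p e)) s) := by
    refine b.ext fun v => ?_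
    have hsb : s * b v = ∑ v' : {v : Fin n → ℕ // ∀ j, v j < p ^ e},
        (↑(ψ (b v')) : MvPolynomial (Fin n) k) * ∏ j, (X j : MvPolynomial (Fin n) k) ^ (p ^ e - 1 - v'.1 j + v.1 j) := by
      rw [hs, Finset.sum_mul]
      refine Finset.sum_congr rfl fun v' _ => ?_
      rw [mul_assoc, hb v, ← Finset.prod_mul_distrib]
      congr 1
      exact Finset.prod_congr rfl fun j _ => (pow_add _ _ _).symm
    have hterm : ∀ v' : {v : Fin n → ℕ // ∀ j, v j < p ^ e},
        φ ((↑(ψ (b v')) : MvPolynomial (Fin n) k) * ∏ j, (X j : MvPolynomial (Fin n) k) ^ (p ^ e - 1 - v'.1 j + v.1 j)) =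
          if v' = v then ψ (b v) else 0 := by
      intro v'
      rw [hsmul, map_smul, smul_eq_mul, hmon]
      by_cases h : v' = v
      · subst h
        have hcond : ∀ j, (p ^ e - 1 - v'.1 j + v'.1 j) % p ^ e = p ^ e - 1 := fun j =>
          (key _ _ (v'.2 j) (v'.2 j)).2 rfl
        have hdiv : ∀ j, (p ^ e - 1 - v'.1 j + v'.1 j) / p ^ e = 0 := fun j =>
          Nat.div_eq_of_lt (by have := v'.2 j; omega)
        rw [if_pos rfl, if_pos hcond]
        have hone : (⟨(∏ j, (X j : MvPolynomial (Fin n) k) ^ ((p ^ e - 1 - v'.1 j + v'.1 j) / p ^ e)) ^ p ^ e,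
            ⟨∏ j, (X j : MvPolynomial (Fin n) k) ^ ((p ^ e - 1 - v'.1 j + v'.1 j) / p ^ e),
              by rw [iterateFrobenius_def]⟩⟩ : RingHom.range (iterateFrobenius (MvPolynomial (Fin n) k) p e)) = 1 := by
          ext
          push_cast
          simp [hdiv]
        rw [hone, mul_one, mul_one]
      · have hcond : ¬ ∀ j, (p ^ e - 1 - v'.1 j + v.1 j) % p ^ e = p ^ e - 1 := by
          intro hc
          apply h
          ext j
          exact (key _ _ (v'.2 j) (v.2 j)).1 (hc j)
        rw [if_neg h, if_neg hcond, mul_zero, mul_zero]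
    symm
    rw [LinearMap.comp_apply, LinearMap.mulLeft_apply, hsb, map_sum,
      Finset.sum_congr rfl fun v' _ => hterm v',
      Finset.sum_ite_eq' Finset.univ v (fun _ => ψ (b v))]
    simp
  rw [main]
  rfl
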